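/- In the parallel coupon collector problem with N ≥ 2 coupon types and C ≥ 1 collectors, for every natural number t, P(T(N, C) ≥ t) ≥ 1 − (1 − ((N−1)/N)^t)^C. -/

import Mathlib

open MeasureTheory ProbabilityTheory
open scoped ENNReal

/-- The cover time of the parallel coupon collector problem: the first round
`t` by which each of the `C` collectors has collected each of the `N` coupon
types (`ω s c` is the coupon type picked by collector `c` in round `s`). -/
noncomputable def coverTime {N C : ℕ} (ω : ℕ → Fin C → Fin N) : ℕ :=
  sInf {t | ∀ c : Fin C, ∀ x : Fin N, ∃ s < t, ω s c = x}

/-- `μ` is the law of the picks in the parallel coupon collector problem with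
`N` coupon types and `C` collectors: the picks of different rounds are
independent, and in each round the joint pick of the `C` collectors is uniform
among all `N ^ C` possibilities (equivalently, each collector independently
picks a coupon type uniformly at random). -/
def IsCouponMeasure {N C : ℕ} (μ : MeasureTheory.Measure (ℕ → Fin C → Fin N)) : Prop :=
  MeasureTheory.IsProbabilityMeasure μ ∧
    ProbabilityTheory.iIndepFun (fun t (ω : ℕ → Fin C → Fin N) => ω t) μ ∧
    ∀ t : ℕ, ∀ f : Fin C → Fin N, μ {ω | ω t = f} = ((N : ENNReal) ^ C)⁻¹

section Helpers


lemma count1 (N t : ℕ) [NeZero N] :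
    Fintype.card {h : Fin t → Fin N // ∀ s, h s ≠ (0 : Fin N)} = (N-1)^t := by
  classical
  rw [Fintype.card_congr (Equiv.subtypePiEquivPi (p := fun _ (b : Fin N) => b ≠ 0))]
  rw [Fintype.card_pi]
  have : Fintype.card {b : Fin N // b ≠ 0} = N - 1 := by
    rw [Fintype.card_subtype_compl (p := fun b : Fin N => b = 0)]
    simp
  simp [this]

lemma count2 (N t : ℕ) [NeZero N] :
    Fintype.card {h : Fin t → Fin N // ∃ s, h s = (0 : Fin N)} = N^t - (N-1)^t := by
  classical
  have h1 : Fintype.card {h : Fin t → Fin N // ¬ ∀ s, h s ≠ (0 : Fin N)}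
      = N^t - (N-1)^t := by
    rw [Fintype.card_subtype_compl, count1]
    simp [Fintype.card_pi]
  rw [← h1]
  apply Fintype.card_congr
  apply Equiv.subtypeEquivRight
  intro h
  push_neg
  rfl

lemma count3 (N C t : ℕ) [NeZero N] :
    Fintype.card {g : Fin t → Fin C → Fin N // ∀ c, ∃ s, g s c = (0 : Fin N)}
      = (N^t - (N-1)^t)^C := by
  classical
  have e : {g : Fin t → Fin C → Fin N // ∀ c, ∃ s, g s c = (0 : Fin N)} ≃
      (Fin C → {h : Fin t → Fin N // ∃ s, h s = (0 : Fin N)}) :=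
    { toFun := fun g c => ⟨fun s => g.1 s c, g.2 c⟩
      invFun := fun h => ⟨fun s c => (h c).1 s, fun c => (h c).2⟩
      left_inv := fun g => rfl
      right_inv := fun h => rfl }
  rw [Fintype.card_congr e, Fintype.card_fun, count2]; simp


lemma cyl_singleton {N C : ℕ} {μ : Measure (ℕ → Fin C → Fin N)}
    (hindep : iIndepFun (fun t (ω : ℕ → Fin C → Fin N) => ω t) μ)
    (hunif : ∀ t : ℕ, ∀ f : Fin C → Fin N, μ {ω | ω t = f} = ((N : ENNReal) ^ C)⁻¹)
    (n : ℕ) (g : ℕ → Fin C → Fin N) :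
    μ {ω | ∀ s < n, ω s = g s} = (((N : ENNReal) ^ C)⁻¹) ^ n := by
  have hset : {ω : ℕ → Fin C → Fin N | ∀ s < n, ω s = g s}
      = ⋂ s ∈ Finset.range n, (fun ω : ℕ → Fin C → Fin N => ω s) ⁻¹' {g s} := by
    ext ω; simp [Set.mem_iInter]
  rw [hset, hindep.measure_inter_preimage_eq_mul (Finset.range n)
    (fun i _ => measurableSet_singleton (g i))]
  have : ∀ s : ℕ, (fun ω : ℕ → Fin C → Fin N => ω s) ⁻¹' {g s}
      = {ω : ℕ → Fin C → Fin N | ω s = g s} := fun s => rfl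
  simp only [this, hunif]
  rw [Finset.prod_const, Finset.card_range]

lemma pre_meas {N C : ℕ} {μ : Measure (ℕ → Fin C → Fin N)} (hN : 0 < N)
    (hindep : iIndepFun (fun t (ω : ℕ → Fin C → Fin N) => ω t) μ)
    (hunif : ∀ t : ℕ, ∀ f : Fin C → Fin N, μ {ω | ω t = f} = ((N : ENNReal) ^ C)⁻¹)
    (n : ℕ) (B : Finset (Fin n → Fin C → Fin N)) :
    μ {ω | (fun s : Fin n => ω s.1) ∈ B} = B.card * (((N : ENNReal) ^ C)⁻¹) ^ n := by
  classical
  set ext : (Fin n → Fin C → Fin N) → ℕ → Fin C → Fin N :=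
    fun g s => if h : s < n then g ⟨s, h⟩ else fun _ => ⟨0, hN⟩ with hext
  have hsets : {ω : ℕ → Fin C → Fin N | (fun s : Fin n => ω s.1) ∈ B}
      = ⋃ g ∈ B, {ω | ∀ s < n, ω s = ext g s} := by
    ext ω
    simp only [Set.mem_setOf_eq, Set.mem_iUnion, exists_prop]
    constructor
    · intro h
      refine ⟨fun s => ω s.1, h, fun s hs => ?_⟩
      simp [hext, hs]
    · rintro ⟨g, hg, h⟩
      have : (fun s : Fin n => ω s.1) = g := by
        funext s
        have := h s.1 s.2
        simpa [hext, s.2] using this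
      rw [this]; exact hg
  have hmeas : ∀ g : Fin n → Fin C → Fin N,
      MeasurableSet {ω : ℕ → Fin C → Fin N | ∀ s < n, ω s = ext g s} := by
    intro g
    have : {ω : ℕ → Fin C → Fin N | ∀ s < n, ω s = ext g s}
        = ⋂ s ∈ Finset.range n, (fun ω : ℕ → Fin C → Fin N => ω s) ⁻¹' {ext g s} := by
      ext ω; simp [Set.mem_iInter]
    rw [this]
    exact MeasurableSet.biInter (Finset.range n).countable_toSet
      (fun s _ => (measurable_pi_apply s) (measurableSet_singleton _))
  have hdisj : (B : Set (Fin n → Fin C → Fin N)).PairwiseDisjoint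
      (fun g => {ω : ℕ → Fin C → Fin N | ∀ s < n, ω s = ext g s}) := by
    intro g _ g' _ hne
    refine Set.disjoint_left.2 fun ω h1 h2 => hne ?_
    funext s
    have e1 := h1 s.1 s.2
    have e2 := h2 s.1 s.2
    have : ext g s.1 = ext g' s.1 := e1 ▸ e2
    simpa [hext, s.2] using this
  rw [hsets, measure_biUnion_finset hdisj (fun g _ => hmeas g)]
  rw [Finset.sum_congr rfl (fun g _ => cyl_singleton hindep hunif n (ext g))]
  rw [Finset.sum_const, nsmul_eq_mul]


lemma null_never {N C : ℕ} {μ : Measure (ℕ → Fin C → Fin N)} [IsProbabilityMeasure μ]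
    (hN : 0 < N)
    (hindep : iIndepFun (fun t (ω : ℕ → Fin C → Fin N) => ω t) μ)
    (hunif : ∀ t : ℕ, ∀ f : Fin C → Fin N, μ {ω | ω t = f} = ((N : ENNReal) ^ C)⁻¹) :
    μ {ω : ℕ → Fin C → Fin N | ¬ ∃ u, ∀ c x, ∃ s < u, ω s c = x} = 0 := by
  classical
  have hsub : {ω : ℕ → Fin C → Fin N | ¬ ∃ u, ∀ c x, ∃ s < u, ω s c = x} ⊆
      ⋃ (c : Fin C) (x : Fin N), {ω : ℕ → Fin C → Fin N | ∀ s, ω s c ≠ x} := by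
    intro ω hω
    by_contra hmem
    simp only [Set.mem_iUnion, not_exists, Set.mem_setOf_eq, not_forall, not_not] at hmem
    apply hω
    choose F hF using hmem
    refine ⟨(Finset.univ.sup fun p : Fin C × Fin N => F p.1 p.2) + 1, fun c x => ?_⟩
    exact ⟨F c x, Nat.lt_succ_of_le (Finset.le_sup (f := fun p : Fin C × Fin N => F p.1 p.2)
      (Finset.mem_univ (c, x))), hF c x⟩
  have hA : ∀ (c : Fin C) (x : Fin N), μ {ω : ℕ → Fin C → Fin N | ∀ s, ω s c ≠ x} = 0 := by
    intro c x
    have hinv_ne : ((N : ENNReal) ^ C)⁻¹ ≠ 0 :=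
      ENNReal.inv_ne_zero.2 (ENNReal.pow_ne_top (ENNReal.natCast_ne_top N))
    have hround : ∀ s : ℕ, μ ((fun ω : ℕ → Fin C → Fin N => ω s) ⁻¹' {f | f c ≠ x})
        ≤ 1 - ((N : ENNReal) ^ C)⁻¹ := by
      intro s
      have hTmeas : MeasurableSet {ω : ℕ → Fin C → Fin N | ω s = fun _ => x} :=
        (measurable_pi_apply s) (measurableSet_singleton _)
      have hsub2 : (fun ω : ℕ → Fin C → Fin N => ω s) ⁻¹' {f | f c ≠ x}
          ⊆ {ω : ℕ → Fin C → Fin N | ω s = fun _ => x}ᶜ := by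
        intro ω h hmem
        have hx : ω s = fun _ => x := hmem
        exact h (show (ω s) c = x by rw [hx])
      calc μ ((fun ω : ℕ → Fin C → Fin N => ω s) ⁻¹' {f | f c ≠ x})
          ≤ μ ({ω : ℕ → Fin C → Fin N | ω s = fun _ => x}ᶜ) := measure_mono hsub2
        _ = 1 - μ {ω : ℕ → Fin C → Fin N | ω s = fun _ => x} :=
            prob_compl_eq_one_sub hTmeas
        _ = 1 - ((N : ENNReal) ^ C)⁻¹ := by rw [hunif]
    have key : ∀ n : ℕ, μ {ω : ℕ → Fin C → Fin N | ∀ s, ω s c ≠ x}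
        ≤ (1 - ((N : ENNReal) ^ C)⁻¹) ^ n := by
      intro n
      have hFmeas : MeasurableSet {f : Fin C → Fin N | f c ≠ x} :=
        (Set.toFinite _).measurableSet
      have hprod := hindep.measure_inter_preimage_eq_mul (Finset.range n)
        (sets := fun _ => {f : Fin C → Fin N | f c ≠ x}) (fun i _ => hFmeas)
      calc μ {ω : ℕ → Fin C → Fin N | ∀ s, ω s c ≠ x}
          ≤ μ (⋂ s ∈ Finset.range n,
              (fun ω : ℕ → Fin C → Fin N => ω s) ⁻¹' {f | f c ≠ x}) := by
            refine measure_mono fun ω hω => ?_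
            simp only [Set.mem_iInter]
            intro s _
            exact hω s
        _ = ∏ s ∈ Finset.range n,
              μ ((fun ω : ℕ → Fin C → Fin N => ω s) ⁻¹' {f | f c ≠ x}) := hprod
        _ ≤ ∏ _s ∈ Finset.range n, (1 - ((N : ENNReal) ^ C)⁻¹) :=
            Finset.prod_le_prod' fun s _ => hround s
        _ = (1 - ((N : ENNReal) ^ C)⁻¹) ^ n := by
            rw [Finset.prod_const, Finset.card_range]
    have hlt : (1 : ENNReal) - ((N : ENNReal) ^ C)⁻¹ < 1 :=
      ENNReal.sub_lt_self ENNReal.one_ne_top one_ne_zero hinv_ne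
    have htend := ENNReal.tendsto_pow_atTop_nhds_zero_of_lt_one hlt
    have := ge_of_tendsto' htend key
    exact le_antisymm this zero_le
  refine le_antisymm ?_ zero_le
  calc μ {ω : ℕ → Fin C → Fin N | ¬ ∃ u, ∀ c x, ∃ s < u, ω s c = x}
      ≤ μ (⋃ (c : Fin C) (x : Fin N), {ω : ℕ → Fin C → Fin N | ∀ s, ω s c ≠ x}) :=
        measure_mono hsub
    _ = 0 := measure_iUnion_null fun c => measure_iUnion_null fun x => hA c x

end Helpers

/-- In the parallel coupon collector problem with `N ≥ 2`
coupon types and `C ≥ 1` collectors, for every natural number `t`,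
`P(T(N, C) ≥ t) ≥ 1 - (1 - ((N-1)/N)^t)^C`. -/
theorem coupon_tail_lower_bound
    (N C : ℕ) (hN : 2 ≤ N) (hC : 1 ≤ C)
    (μ : Measure (ℕ → Fin C → Fin N)) (hμ : IsCouponMeasure μ) (t : ℕ) :
    ENNReal.ofReal (1 - (1 - (((N : ℝ) - 1) / N) ^ t) ^ C) ≤
      μ {ω | t ≤ coverTime ω} := by
  obtain ⟨hprob, hindep, hunif⟩ := hμ
  haveI := hprob
  have pre_meas := fun (h : 0 < N) (n : ℕ) (B : Finset (Fin n → Fin C → Fin N)) =>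
    pre_meas h hindep hunif n B
  have null_never := null_never (by omega : 0 < N) hindep hunif
  classical
  haveI : NeZero N := ⟨by omega⟩
  set q : ℝ := ((N : ℝ) - 1) / N with hqdef
  have hN0 : (0:ℝ) < (N:ℝ) := by exact_mod_cast (by omega : 0 < N)
  have hN1 : (1:ℝ) ≤ (N:ℝ) := by exact_mod_cast (by omega : 1 ≤ N)
  have hq0 : 0 ≤ q := div_nonneg (by linarith) hN0.le
  have hq1 : q ≤ 1 := by
    rw [hqdef, div_le_one hN0]; linarith
  have hqt1 : q ^ t ≤ 1 := pow_le_one₀ hq0 hq1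
  have hr0 : 0 ≤ (1 - q ^ t) ^ C := pow_nonneg (by linarith) C
  -- the finset of "good" prefixes
  set B : Finset (Fin t → Fin C → Fin N) :=
    Finset.univ.filter (fun g => ∀ c, ∃ s, g s c = (0 : Fin N)) with hB
  set D : Set (ℕ → Fin C → Fin N) := {ω | (fun s : Fin t => ω s.1) ∈ B} with hD
  have hm_le : (N-1)^t ≤ N^t := Nat.pow_le_pow_left (Nat.sub_le N 1) t
  set m : ℕ := N^t - (N-1)^t with hm
  have hBcard : B.card = m^C := by
    rw [← count3 N C t, Fintype.card_subtype]
  -- μ D computation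
  have hμD : μ D = (m : ENNReal)^C * (((N : ENNReal) ^ t) ^ C)⁻¹ := by
    have hpow : (((N : ENNReal)) ^ C)⁻¹ ^ t = (((N : ENNReal) ^ t) ^ C)⁻¹ := by
      rw [← ENNReal.inv_pow, ← pow_mul, ← pow_mul, mul_comm, ENNReal.inv_pow]
    rw [hD, pre_meas (by omega) t B, hBcard, hpow, Nat.cast_pow]
  -- real value identification
  have h1 : ((N - 1 : ℕ) : ℝ) = (N : ℝ) - 1 := by
    rw [Nat.cast_sub (by omega : 1 ≤ N), Nat.cast_one]
  have hcast : (m : ℝ) = (N:ℝ)^t - ((N:ℝ)-1)^t := by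
    rw [hm, Nat.cast_sub hm_le, Nat.cast_pow, Nat.cast_pow, h1]
  have hrq : 1 - q ^ t = (m : ℝ) / (N:ℝ)^t := by
    rw [hcast, hqdef, div_pow, sub_div]
    field_simp
  have hμDval : μ D = ENNReal.ofReal ((1 - q ^ t) ^ C) := by
    rw [hrq, div_pow, ENNReal.ofReal_div_of_pos (by positivity),
      ENNReal.ofReal_pow (by positivity), ENNReal.ofReal_pow (by positivity),
      ENNReal.ofReal_pow hN0.le, ENNReal.ofReal_natCast, ENNReal.ofReal_natCast,
      hμD, div_eq_mul_inv]
  -- D is measurable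
  have hDmeas : MeasurableSet D := by
    rw [hD]
    have : {ω : ℕ → Fin C → Fin N | (fun s : Fin t => ω s.1) ∈ B}
        = (fun (ω : ℕ → Fin C → Fin N) (s : Fin t) => ω s.1) ⁻¹' (B : Set _) := rfl
    rw [this]
    exact (measurable_pi_lambda _ fun s => measurable_pi_apply s.1) B.measurableSet
  have hcompl : μ Dᶜ = 1 - μ D := prob_compl_eq_one_sub hDmeas
  -- inclusion
  set G : Set (ℕ → Fin C → Fin N) := {ω | ∃ u, ∀ c x, ∃ s < u, ω s c = x} with hG
  have hsub : Dᶜ ∩ G ⊆ {ω | t ≤ coverTime ω} := by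
    rintro ω ⟨hω, hne⟩
    have hω' : ¬ ∀ c : Fin C, ∃ s < t, ω s c = (0 : Fin N) := by
      intro hall
      apply hω
      rw [hD, Set.mem_setOf_eq, hB]
      simp only [Finset.mem_filter, Finset.mem_univ, true_and]
      intro c
      obtain ⟨s, hs, hx⟩ := hall c
      exact ⟨⟨s, hs⟩, hx⟩
    push_neg at hω'
    obtain ⟨c, hc⟩ := hω'
    have hSne : {u | ∀ c : Fin C, ∀ x : Fin N, ∃ s < u, ω s c = x}.Nonempty := hne
    have hmem := Nat.sInf_mem hSne
    obtain ⟨s, hs, hsx⟩ := hmem c 0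
    have hts : t ≤ s := not_lt.1 fun h => (hc s h) hsx
    exact le_of_lt (lt_of_le_of_lt hts hs)
  have hGnull : μ Gᶜ = 0 := by
    have : Gᶜ = {ω : ℕ → Fin C → Fin N | ¬ ∃ u, ∀ c x, ∃ s < u, ω s c = x} := rfl
    rw [this, null_never]
  -- chain
  have hchain : μ Dᶜ ≤ μ {ω | t ≤ coverTime ω} := by
    calc μ Dᶜ ≤ μ (Dᶜ ∩ G) + μ (Dᶜ \ G) := measure_le_inter_add_diff μ Dᶜ G
      _ ≤ μ {ω | t ≤ coverTime ω} + μ Gᶜ :=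
          add_le_add (measure_mono hsub) (measure_mono (Set.diff_subset_compl _ _))
      _ = μ {ω | t ≤ coverTime ω} := by rw [hGnull, add_zero]
  refine le_trans ?_ hchain
  rw [ENNReal.ofReal_sub _ hr0, ENNReal.ofReal_one, hcompl, hμDval]
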